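/- Let W be an invertible diagonal real p×p matrix, V a real p×r_S matrix, U a real p×r_L matrix, and T an invertible real p×p matrix. Set D := (W Wᵀ)⁻¹, A := I_{r_S} + Vᵀ D V, S := D − D V A⁻¹ Vᵀ D, L := S U (I_{r_L} + Uᵀ S U)⁻¹ Uᵀ S, Ω := W Wᵀ + V Vᵀ + U Uᵀ, and Σ := T⁻ᵀ Ω T⁻¹. Then Σ is invertible and its inverse (the observed-level precision) satisfies Σ⁻¹ = T S Tᵀ − T L Tᵀ. -/

import Mathlib

open Matrix

lemma mul_transpose_self_posDef {n : Type*} [Fintype n] [DecidableEq n]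
    (M : Matrix n n ℝ) (hM : IsUnit M) : (M * Mᵀ).PosDef := by
  have hsd : (M * Mᵀ).PosSemidef := by
    simpa [conjTranspose_eq_transpose_of_trivial] using
      Matrix.posSemidef_self_mul_conjTranspose M
  refine Matrix.PosDef.of_dotProduct_mulVec_pos hsd.1 fun x hx => ?_
  have hMT : IsUnit Mᵀ := by simpa using hM.map (transposeRingEquiv n ℝ)
  have hy : Mᵀ *ᵥ x ≠ 0 := by
    intro h
    apply hx
    have := congrArg (fun v => (Mᵀ)⁻¹ *ᵥ v) h
    simpa [mulVec_mulVec, Matrix.nonsing_inv_mul _ ((isUnit_iff_isUnit_det _).1 hMT)] using this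
  have : star x ⬝ᵥ (M * Mᵀ) *ᵥ x = star (Mᵀ *ᵥ x) ⬝ᵥ (Mᵀ *ᵥ x) := by
    simp only [← mulVec_mulVec, dotProduct_mulVec, star_trivial, mulVec_transpose]
  rw [this]
  exact dotProduct_star_self_pos_iff.mpr hy

lemma conj_posSemidef {n m : Type*} [Fintype n] [Fintype m]
    {M : Matrix n n ℝ} (hM : M.PosSemidef) (B : Matrix n m ℝ) :
    (Bᵀ * M * B).PosSemidef := by
  simpa [conjTranspose_eq_transpose_of_trivial] using hM.conjTranspose_mul_mul_same B

theorem observed_precision_decomposition {p rS rL : ℕ}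
    (W : Matrix (Fin p) (Fin p) ℝ) (hWdiag : W.IsDiag) (hW : IsUnit W)
    (V : Matrix (Fin p) (Fin rS) ℝ) (U : Matrix (Fin p) (Fin rL) ℝ)
    (T : Matrix (Fin p) (Fin p) ℝ) (hT : IsUnit T)
    (D : Matrix (Fin p) (Fin p) ℝ) (hD : D = (W * Wᵀ)⁻¹)
    (A : Matrix (Fin rS) (Fin rS) ℝ) (hA : A = 1 + Vᵀ * D * V)
    (S : Matrix (Fin p) (Fin p) ℝ) (hS : S = D - D * V * A⁻¹ * Vᵀ * D)
    (L : Matrix (Fin p) (Fin p) ℝ) (hL : L = S * U * (1 + Uᵀ * S * U)⁻¹ * Uᵀ * S)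
    (Ω : Matrix (Fin p) (Fin p) ℝ) (hΩ : Ω = W * Wᵀ + V * Vᵀ + U * Uᵀ)
    (Sig : Matrix (Fin p) (Fin p) ℝ) (hSig : Sig = (Tᵀ)⁻¹ * Ω * T⁻¹) :
    IsUnit Sig ∧ Sig⁻¹ = T * S * Tᵀ - T * L * Tᵀ := by
  -- W Wᵀ is positive definite
  have hMpd : (W * Wᵀ).PosDef := mul_transpose_self_posDef W hW
  have hDpd : D.PosDef := hD ▸ hMpd.inv
  -- A is positive definite hence invertible
  have hApd : A.PosDef := by
    rw [hA]; exact Matrix.PosDef.add_posSemidef Matrix.PosDef.one (conj_posSemidef hDpd.posSemidef V)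
  -- first Woodbury: W Wᵀ + V Vᵀ
  have hP1pd : (W * Wᵀ + V * Vᵀ).PosDef := by
    refine Matrix.PosDef.add_posSemidef hMpd ?_
    simpa [conjTranspose_eq_transpose_of_trivial] using Matrix.posSemidef_self_mul_conjTranspose V
  have hS1 : (W * Wᵀ + V * Vᵀ)⁻¹ = S := by
    have h := Matrix.add_mul_mul_inv_eq_sub (W * Wᵀ) V (1 : Matrix (Fin rS) (Fin rS) ℝ) Vᵀ
      hMpd.isUnit isUnit_one (by rw [inv_one, ← hD, ← hA]; exact hApd.isUnit)
    rw [Matrix.mul_one] at h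
    rw [h, inv_one, ← hD, ← hA, hS]
  have hSpd : S.PosDef := hS1 ▸ hP1pd.inv
  have hBpd : ((1 : Matrix (Fin rL) (Fin rL) ℝ) + Uᵀ * S * U).PosDef :=
    Matrix.PosDef.add_posSemidef Matrix.PosDef.one (conj_posSemidef hSpd.posSemidef U)
  have hΩpd : Ω.PosDef := by
    rw [hΩ]
    refine Matrix.PosDef.add_posSemidef hP1pd ?_
    simpa [conjTranspose_eq_transpose_of_trivial] using Matrix.posSemidef_self_mul_conjTranspose U
  have hΩinv : Ω⁻¹ = S - L := by
    have h := Matrix.add_mul_mul_inv_eq_sub (W * Wᵀ + V * Vᵀ) U (1 : Matrix (Fin rL) (Fin rL) ℝ) Uᵀ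
      hP1pd.isUnit isUnit_one (by rw [inv_one, hS1]; exact hBpd.isUnit)
    rw [Matrix.mul_one, inv_one, hS1] at h
    rw [hΩ, h, hL]
  have hTT : IsUnit Tᵀ := by simpa using hT.map (transposeRingEquiv (Fin p) ℝ)
  have hTd : IsUnit T.det := (isUnit_iff_isUnit_det _).1 hT
  have hTTd : IsUnit Tᵀ.det := (isUnit_iff_isUnit_det _).1 hTT
  constructor
  · rw [hSig]
    exact ((Matrix.isUnit_nonsing_inv_iff.2 hTT).mul hΩpd.isUnit).mul
      (Matrix.isUnit_nonsing_inv_iff.2 hT)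
  · rw [hSig, Matrix.mul_inv_rev, Matrix.mul_inv_rev,
      Matrix.nonsing_inv_nonsing_inv _ hTd, Matrix.nonsing_inv_nonsing_inv _ hTTd, hΩinv]
    simp [Matrix.mul_sub, Matrix.sub_mul, Matrix.mul_assoc]
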